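/- arXiv:1809.04072 — 5 statements merged into one kernel-verified Lean document; each statement's English description precedes it below -/
import Mathlib

section
/- Let n > 1, m ≥ 1, j ≥ 0 be integers and define the sequence d by d_0 given with d_k = m·j + ⌈d_{k-1}/n⌉ for k ≥ 1. Then for all k ≥ 1, d_k = m·j + ⌈(m·j·n·(n^{k-1} - 1)/(n-1) + d_0)/n^k⌉. -/
lemma ceil_ceil_div (x : ℝ) (b : ℤ) (hb : 0 < b) :
    ⌈((⌈x⌉ : ℤ) : ℝ) / (b : ℝ)⌉ = ⌈x / (b : ℝ)⌉ := by
  have hb' : (0 : ℝ) < (b : ℝ) := by exact_mod_cast hb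
  have key : ∀ z : ℤ, (⌈((⌈x⌉ : ℤ) : ℝ) / (b : ℝ)⌉ ≤ z ↔ ⌈x / (b : ℝ)⌉ ≤ z) := by
    intro z
    rw [Int.ceil_le, Int.ceil_le, div_le_iff₀ hb', div_le_iff₀ hb']
    rw [show ((z : ℝ) * (b : ℝ)) = (((z * b : ℤ) : ℝ)) by push_cast; ring,
      Int.cast_le, Int.ceil_le]
  exact le_antisymm ((key _).mpr le_rfl) ((key _).mp le_rfl)

theorem deck_id_formula (n m j : ℤ) (hn : 1 < n) (hm : 1 ≤ m) (hj : 0 ≤ j)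
    (d : ℕ → ℤ)
    (hrec : ∀ k : ℕ, 1 ≤ k → d k = m * j + ⌈((d (k - 1) : ℝ)) / (n : ℝ)⌉) :
    ∀ k : ℕ, 1 ≤ k →
      d k = m * j +
        ⌈((m : ℝ) * j * n * (((n : ℝ) ^ (k - 1) - 1) / ((n : ℝ) - 1)) + (d 0 : ℝ)) /
          (n : ℝ) ^ k⌉ := by
  have hn' : (1 : ℝ) < (n : ℝ) := by exact_mod_cast hn
  have hn0 : (0 : ℝ) < (n : ℝ) := by linarith
  have hnm1 : ((n : ℝ) - 1) ≠ 0 := by linarith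
  have main : ∀ l : ℕ, d (l + 1) = m * j +
      ⌈((m : ℝ) * j * n * (((n : ℝ) ^ l - 1) / ((n : ℝ) - 1)) + (d 0 : ℝ)) /
        (n : ℝ) ^ (l + 1)⌉ := by
    intro l
    induction l with
    | zero =>
      have h := hrec 1 le_rfl
      simp only [pow_zero, sub_self, zero_div, mul_zero, zero_add, pow_one] at *
      simpa using h
    | succ l ih =>
      have h := hrec (l + 2) (by omega)
      have hstep : d (l + 2 - 1) = d (l + 1) := by norm_num
      rw [hstep, ih] at h
      set X : ℝ := (m : ℝ) * j * n * (((n : ℝ) ^ l - 1) / ((n : ℝ) - 1)) + (d 0 : ℝ) with hX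
      have hcast : ((m * j + ⌈X / (n : ℝ) ^ (l + 1)⌉ : ℤ) : ℝ) =
          ((⌈(X + (m : ℝ) * j * (n : ℝ) ^ (l + 1)) / (n : ℝ) ^ (l + 1)⌉ : ℤ) : ℝ) := by
        have : (X + (m : ℝ) * j * (n : ℝ) ^ (l + 1)) / (n : ℝ) ^ (l + 1)
            = X / (n : ℝ) ^ (l + 1) + ((m * j : ℤ) : ℝ) := by
          push_cast
          field_simp
        rw [this, Int.ceil_add_intCast]
        push_cast
        ring
      rw [h, hcast]
      have hpow : ((n ^ (l + 1) : ℤ) : ℝ) = (n : ℝ) ^ (l + 1) := by push_cast; ring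
      have hceil := ceil_ceil_div ((X + (m : ℝ) * j * (n : ℝ) ^ (l + 1)) / (n : ℝ) ^ (l + 1))
        n (by omega)
      rw [hceil]
      congr 2
      rw [div_div]
      rw [show (n : ℝ) ^ (l + 1) * (n : ℝ) = (n : ℝ) ^ (l + 1 + 1) by ring]
      congr 1
      rw [hX]
      field_simp
      ring
  intro k hk
  obtain ⟨l, rfl⟩ : ∃ l, k = l + 1 := ⟨k - 1, by omega⟩
  have : (l + 1 - 1 : ℕ) = l := by omega
  rw [this]
  exact main l
end

section
/- Let C, n, m, k be positive integers with n > 1, C = m·n, and n^k > C - 1. Then for every integer d_0 with 1 ≤ d_0 ≤ C, m·(n-1) + ⌈(m·(n-1)·n·(n^{k-1} - 1)/(n-1) + d_0)/n^k⌉ = C. -/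
theorem trick_j_top_solvable (C n m : ℤ) (k : ℕ) (hC : 0 < C) (hn : 1 < n)
    (hm : 0 < m) (hk : 0 < k) (hCmn : C = m * n) (hnk : C - 1 < n ^ k) :
    ∀ d0 : ℤ, 1 ≤ d0 → d0 ≤ C →
      m * (n - 1) +
        ⌈((m : ℝ) * ((n : ℝ) - 1) * n * (((n : ℝ) ^ (k - 1) - 1) / ((n : ℝ) - 1)) +
            (d0 : ℝ)) / (n : ℝ) ^ k⌉ = C := by
  intro d0 hd1 hd2
  have hn1R : (1:ℝ) < (n:ℝ) := by exact_mod_cast hn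
  have hnne : (n:ℝ) - 1 ≠ 0 := by linarith
  have hnkpos : (0:ℝ) < (n:ℝ)^k := by positivity
  have hpow : (n:ℝ)^(k-1) * n = (n:ℝ)^k := by
    rw [← pow_succ]; congr 1; omega
  have hCR : (C:ℝ) = (m:ℝ) * n := by exact_mod_cast hCmn
  have key : ((m : ℝ) * ((n : ℝ) - 1) * n * (((n : ℝ) ^ (k - 1) - 1) / ((n : ℝ) - 1)) +
            (d0 : ℝ)) / (n : ℝ) ^ k = ((d0:ℝ) - C)/(n:ℝ)^k + (m:ℤ) := by
    push_cast
    field_simp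
    linear_combination (m:ℝ)*hpow + hCR
  rw [key, Int.ceil_add_intCast]
  have hnkR : (C:ℝ) - 1 < (n:ℝ)^k := by exact_mod_cast hnk
  have hd1R : (1:ℝ) ≤ (d0:ℝ) := by exact_mod_cast hd1
  have hd2R : (d0:ℝ) ≤ (C:ℝ) := by exact_mod_cast hd2
  have h0 : ⌈((d0:ℝ) - C)/(n:ℝ)^k⌉ = 0 := by
    rw [Int.ceil_eq_zero_iff, Set.mem_Ioc]
    constructor
    · rw [lt_div_iff₀ hnkpos]; linarith
    · exact div_nonpos_of_nonpos_of_nonneg (by linarith) (le_of_lt hnkpos)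
  rw [h0]
  linarith [hCmn]
end

section
/- Let C, n, m, j be positive integers with n > 1, C = m·n, 0 < j < n-1, and suppose (n-1) divides m·j. Set b = m·j/(n-1) ∈ ℤ. Then (with d_k(d_0) = m·j + b + ⌈(d_0 - b·n)/n^k⌉) for every k ≥ 1 the map d_0 ↦ d_k(d_0) on {1, ..., C} is not constant; concretely, ⌈(1 - b·n)/n^k⌉ ≤ 0 < ⌈(C - b·n)/n^k⌉ for every positive integer k. -/
theorem trick_middle_not_solvable (C n m j b : ℤ) (hC : 0 < C) (hn : 1 < n)
    (hm : 0 < m) (hj : 0 < j) (hjn : j < n - 1) (hCmn : C = m * n)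
    (hb : b * (n - 1) = m * j) :
    ∀ k : ℕ, 1 ≤ k →
      ⌈((1 : ℝ) - (b : ℝ) * n) / (n : ℝ) ^ k⌉ ≤ 0 ∧
        0 < ⌈((C : ℝ) - (b : ℝ) * n) / (n : ℝ) ^ k⌉ := by
  have hn1 : (0 : ℤ) < n - 1 := by linarith
  have hbpos : 0 < b := by
    by_contra h
    push_neg at h
    nlinarith
  have hbm : b < m := by
    by_contra h
    push_neg at h
    nlinarith
  have h1 : (1 : ℤ) ≤ b * n := by nlinarith
  have h2 : b * n < C := by nlinarith
  intro k hk
  have hnpow : (0 : ℝ) < (n : ℝ) ^ k := by positivity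
  constructor
  · rw [show (0 : ℤ) = ((0 : ℤ) : ℤ) from rfl, Int.ceil_le]
    push_cast
    apply div_nonpos_of_nonpos_of_nonneg _ hnpow.le
    have : (1 : ℝ) ≤ (b : ℝ) * n := by exact_mod_cast h1
    linarith
  · rw [Int.ceil_pos]
    apply div_pos _ hnpow
    have : (b : ℝ) * n < C := by exact_mod_cast h2
    linarith
end

section
/- Let C, n, m be positive integers with n > 1 and C = m·n. The number of integers j with 0 ≤ j ≤ n-1 such that the trick (C, n, j) is solvable—i.e., j = 0, or j = n-1, or (0 < j < n-1 and (n-1) ∤ m·j)—equals n + 1 - gcd(m, n-1). -/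
theorem count_solvable (C n m : ℕ) (hC : 0 < C) (hn : 1 < n) (hm : 0 < m)
    (hCmn : C = m * n) :
    ((Finset.Icc 0 (n - 1)).filter
        (fun j => j = 0 ∨ j = n - 1 ∨ (0 < j ∧ j < n - 1 ∧ ¬ (n - 1) ∣ m * j))).card =
      n + 1 - Nat.gcd m (n - 1) := by
  set t := n - 1 with ht
  have ht0 : 0 < t := by omega
  set g := Nat.gcd m t with hg
  have hg0 : 0 < g := Nat.gcd_pos_of_pos_right m ht0
  set d := t / g with hd
  have hdg : g * d = t := Nat.mul_div_cancel' (Nat.gcd_dvd_right m t)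
  have hgle : g ≤ t := Nat.le_of_dvd ht0 (Nat.gcd_dvd_right m t)
  have hd0 : 0 < d := Nat.div_pos hgle hg0
  have key : ∀ j, t ∣ m * j ↔ d ∣ j := by
    intro j
    have hm' : g * (m / g) = m := Nat.mul_div_cancel' (Nat.gcd_dvd_left m t)
    have hcop : Nat.Coprime (m / g) (t / g) := Nat.coprime_div_gcd_div_gcd hg0
    constructor
    · intro h
      have h2 : g * d ∣ g * ((m / g) * j) := by
        rw [← mul_assoc, hm']
        calc g * d = t := hdg
        _ ∣ m * j := h
      have h3 : d ∣ (m / g) * j := (Nat.mul_dvd_mul_iff_left hg0).mp h2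
      exact (Nat.Coprime.dvd_mul_left hcop.symm).mp h3
    · intro h
      calc t = d * g := by rw [Nat.mul_comm]; exact hdg.symm
      _ ∣ j * m := Nat.mul_dvd_mul h (by rw [← hm']; exact Dvd.intro _ rfl)
      _ = m * j := Nat.mul_comm j m
  have hB : ((Finset.Ioo 0 t).filter (fun j => t ∣ m * j)) =
      (Finset.Ioo 0 g).image (· * d) := by
    ext j
    simp only [Finset.mem_filter, Finset.mem_Ioo, Finset.mem_image, key]
    constructor
    · rintro ⟨⟨hj0, hjt⟩, k, rfl⟩
      refine ⟨k, ⟨?_, ?_⟩, Nat.mul_comm k d⟩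
      · rcases Nat.eq_zero_or_pos k with rfl | h
        · simp at hj0
        · exact h
      · by_contra hk
        push_neg at hk
        have h5 : d * g ≤ d * k := Nat.mul_le_mul_left d hk
        have h6 : d * g = t := by rw [Nat.mul_comm]; exact hdg
        omega
    · rintro ⟨k, ⟨hk0, hkg⟩, rfl⟩
      have h1 : 0 < k * d := by positivity
      have h2 : k * d < g * d := (Nat.mul_lt_mul_right hd0).mpr hkg
      have h3 : g * d = t := hdg
      exact ⟨⟨h1, by omega⟩, k, Nat.mul_comm k d⟩
  have hBcard : ((Finset.Ioo 0 t).filter (fun j => t ∣ m * j)).card = g - 1 := by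
    rw [hB, Finset.card_image_of_injective _ (fun a b hab => Nat.eq_of_mul_eq_mul_right hd0 hab)]
    simp
  have hS : ((Finset.Icc 0 t).filter
        (fun j => j = 0 ∨ j = t ∨ (0 < j ∧ j < t ∧ ¬ t ∣ m * j))) =
      (Finset.Icc 0 t) \ ((Finset.Ioo 0 t).filter (fun j => t ∣ m * j)) := by
    ext j
    simp only [Finset.mem_filter, Finset.mem_sdiff, Finset.mem_Icc, Finset.mem_Ioo]
    constructor
    · rintro ⟨hj, h | h | ⟨h1, h2, h3⟩⟩
      · exact ⟨hj, by omega⟩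
      · refine ⟨hj, ?_⟩; rintro ⟨⟨_, h2⟩, _⟩; omega
      · exact ⟨hj, by tauto⟩
    · rintro ⟨hj, h⟩
      refine ⟨hj, ?_⟩
      by_cases h0 : j = 0
      · tauto
      by_cases hjt : j = t
      · tauto
      right; right
      refine ⟨by omega, by omega, fun hdvd => h ⟨⟨by omega, by omega⟩, hdvd⟩⟩
  rw [hS, Finset.card_sdiff_of_subset (by intro x; simp only [Finset.mem_filter, Finset.mem_Ioo, Finset.mem_Icc]; omega),
    hBcard]
  simp [Nat.card_Icc]
  omega
end

section
/- For the 21 card trick: with C = 21, n = 3, j = 1, m = 7, b = 7/2, for every integer d_0 with 1 ≤ d_0 ≤ 21, 7 + ⌈7/2 + (d_0 - 21/2)/27⌉ = 11. In particular the tracked card is the 11th card after 3 iterations regardless of its initial position. -/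
theorem twentyone_card_trick :
    ∀ d0 : ℤ, 1 ≤ d0 → d0 ≤ 21 →
      7 + ⌈(7 / 2 : ℝ) + ((d0 : ℝ) - 21 / 2) / 27⌉ = 11 := by
  intro d0 h1 h2
  have h1' : (1 : ℝ) ≤ (d0 : ℝ) := by exact_mod_cast h1
  have h2' : (d0 : ℝ) ≤ 21 := by exact_mod_cast h2
  have : ⌈(7 / 2 : ℝ) + ((d0 : ℝ) - 21 / 2) / 27⌉ = 4 := by
    rw [Int.ceil_eq_iff]
    constructor <;> push_cast <;> nlinarith
  omega
end
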